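/- Let X be a Polish space, Ω = C([0,∞) → X) with the compact-open topology, ℱ its Borel σ-algebra, (ℱ_t)_{t≥0} the natural filtration generated by the coordinate maps, θ_s the shift, and Ω_x = {w : w(0)=x}. Fix s ≥ 0, a probability measure P on (Ω, ℱ), and an ℱ_s-measurable map Q_• : w ↦ Q_w from Ω to the space of probability measures on Ω (i.e., w ↦ Q_w f is ℱ_s-measurable for every bounded continuous f) such that Q_w is supported on Ω_{w(s)} for every w. Then there exists a unique probability measure P ⊗_s Q on (Ω, ℱ) such that P ⊗_s Q agrees with P on ℱ_s, and the regular conditional probability distribution satisfies (P ⊗_s Q)[θ_s^{-1}(·) | ℱ_s](w) = Q_w(·) for (P ⊗_s Q)-almost all w ∈ Ω. -/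

import Mathlib

open MeasureTheory Set
open scoped NNReal

noncomputable section

/-- The space `Ω = C([0,∞) → X)` with the compact-open topology. -/
abbrev IPath (X : Type*) [TopologicalSpace X] : Type _ := C(ℝ≥0, X)

variable {X : Type*} [TopologicalSpace X]

/-- The shift `θ_s : w(·) ↦ w(s + ·)`. -/
def shift (s : ℝ≥0) (w : IPath X) : IPath X :=
  w.comp ⟨fun t => s + t, by fun_prop⟩

/-- The Borel σ-algebra `ℱ` on the path space. -/
instance : MeasurableSpace (IPath X) := borel _
instance : BorelSpace (IPath X) := ⟨rfl⟩

/-- The natural filtration `ℱ_s`: the smallest σ-algebra on path space making all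
coordinate maps `w ↦ w t`, `t ≤ s`, measurable. -/
def natF (X : Type*) [TopologicalSpace X] [MeasurableSpace X] (s : ℝ≥0) :
    MeasurableSpace (IPath X) :=
  ⨆ t ∈ Iic s, MeasurableSpace.comap (fun w : IPath X => w t) inferInstance

set_option linter.unusedSectionVars false
open TopologicalSpace
open scoped ENNReal

namespace OTimes

instance instPolishIPath [PolishSpace X] : PolishSpace (IPath X) := by
  letI := upgradeIsCompletelyMetrizable X
  infer_instance

/-- cylinder σ-algebra -/
def cyl (X : Type*) [TopologicalSpace X] [MeasurableSpace X] : MeasurableSpace (IPath X) :=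
  ⨆ t : ℝ≥0, MeasurableSpace.comap (fun w : IPath X => w t) inferInstance

variable [MeasurableSpace X] [BorelSpace X]

lemma measurable_eval (t : ℝ≥0) : Measurable (fun w : IPath X => w t) :=
  (ContinuousEvalConst.continuous_eval_const t).measurable

lemma continuous_shift (s : ℝ≥0) : Continuous (shift (X := X) s) :=
  ContinuousMap.continuous_precomp _

lemma shift_apply (s : ℝ≥0) (w : IPath X) (t : ℝ≥0) : shift s w t = w (s + t) := rfl

theorem borel_le_cyl [PolishSpace X] :
    (inferInstance : MeasurableSpace (IPath X)) ≤ cyl X := by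
  set u : ℕ → ℝ≥0 := denseSeq ℝ≥0 with hu
  set Φ : IPath X → (ℕ → X) := fun w n => w (u n) with hΦ
  have hΦcont : Continuous Φ :=
    continuous_pi fun n => ContinuousEvalConst.continuous_eval_const (u n)
  have hΦinj : Function.Injective Φ := by
    intro w₁ w₂ h
    ext t
    have heq : Set.EqOn (⇑w₁) (⇑w₂) (Set.range u) := by
      rintro _ ⟨n, rfl⟩; exact congrFun h n
    have := Continuous.ext_on (denseRange_denseSeq ℝ≥0) w₁.continuous w₂.continuous heq
    exact congrFun this t
  have hemb : MeasurableEmbedding Φ := hΦcont.measurable.measurableEmbedding hΦinj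
  intro S hS
  have hS' : MeasurableSet (Φ '' S) := hemb.measurableSet_image.2 hS
  have hle : MeasurableSpace.comap Φ (inferInstance : MeasurableSpace (ℕ → X)) ≤ cyl X := by
    have hpi : (inferInstance : MeasurableSpace (ℕ → X)) =
        ⨆ n : ℕ, MeasurableSpace.comap (fun g : ℕ → X => g n) inferInstance := rfl
    rw [hpi, MeasurableSpace.comap_iSup]
    refine iSup_le fun n => ?_
    rw [MeasurableSpace.comap_comp]
    exact le_iSup (fun t => MeasurableSpace.comap (fun w : IPath X => w t)
      (inferInstance : MeasurableSpace X)) (u n)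
  have hrw : S = Φ ⁻¹' (Φ '' S) := (Set.preimage_image_eq S hΦinj).symm
  rw [hrw]
  exact hle _ ⟨Φ '' S, hS', rfl⟩

lemma natF_le (s : ℝ≥0) :
    natF X s ≤ (inferInstance : MeasurableSpace (IPath X)) :=
  iSup₂_le fun t _ => (measurable_eval t).comap_le

lemma natF_eval_measurable (s : ℝ≥0) {t : ℝ≥0} (ht : t ≤ s) :
    Measurable[natF X s] (fun w : IPath X => w t) := by
  have h : MeasurableSpace.comap (fun w : IPath X => w t) inferInstance ≤ natF X s :=
    le_iSup₂ (f := fun (t : ℝ≥0) (_ : t ∈ Iic s) =>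
      MeasurableSpace.comap (fun w : IPath X => w t)
        (inferInstance : MeasurableSpace X)) t ht
  exact fun U hU => h _ ⟨U, hU, rfl⟩

/-- the σ-algebra of sets depending only on times ≤ s -/
def agreeSA (X : Type*) [TopologicalSpace X] (s : ℝ≥0) : MeasurableSpace (IPath X) where
  MeasurableSet' A := ∀ w₁ w₂ : IPath X, (∀ t, t ≤ s → w₁ t = w₂ t) → (w₁ ∈ A ↔ w₂ ∈ A)
  measurableSet_empty := by simp
  measurableSet_compl := fun A hA w₁ w₂ h => by
    simp only [Set.mem_compl_iff, not_iff_not]; exact hA w₁ w₂ h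
  measurableSet_iUnion := fun f hf w₁ w₂ h => by
    simp only [Set.mem_iUnion]; exact exists_congr fun i => hf i w₁ w₂ h

lemma natF_invariant {s : ℝ≥0} {A : Set (IPath X)}
    (hA : MeasurableSet[natF X s] A) {w₁ w₂ : IPath X} (h : ∀ t, t ≤ s → w₁ t = w₂ t) :
    w₁ ∈ A ↔ w₂ ∈ A := by
  have hle : natF X s ≤ agreeSA X s := by
    refine iSup₂_le fun t ht => ?_
    rintro A ⟨U, hU, rfl⟩ w₁ w₂ h
    simp only [Set.mem_preimage, h t ht]
  exact hle A hA w₁ w₂ h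

open scoped Classical

/-- glue two paths at time `s` (junk value `w` if endpoints don't match) -/
def glue [T2Space X] (s : ℝ≥0) (w v : IPath X) : IPath X :=
  if h : v 0 = w s then
    ⟨fun t => if t ≤ s then w t else v (t - s), by
      refine Continuous.if_le w.continuous (v.continuous.comp (by fun_prop))
        continuous_id continuous_const ?_
      intro t ht
      rw [ht, tsub_self, h]⟩
  else w

variable [T2Space X]

lemma glue_apply {s : ℝ≥0} {w v : IPath X} (h : v 0 = w s) (t : ℝ≥0) :
    glue s w v t = if t ≤ s then w t else v (t - s) := by
  rw [glue, dif_pos h]; rfl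

lemma glue_eval (s : ℝ≥0) (w v : IPath X) (t : ℝ≥0) :
    glue s w v t = if v 0 = w s then (if t ≤ s then w t else v (t - s)) else w t := by
  by_cases h : v 0 = w s
  · rw [glue_apply h, if_pos h]
  · rw [glue, dif_neg h, if_neg h]

lemma glue_agree {s : ℝ≥0} {w v : IPath X} (h : v 0 = w s) {t : ℝ≥0} (ht : t ≤ s) :
    glue s w v t = w t := by rw [glue_apply h, if_pos ht]

lemma shift_glue {s : ℝ≥0} {w v : IPath X} (h : v 0 = w s) :
    shift s (glue s w v) = v := by
  ext t
  rw [shift_apply, glue_apply h]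
  rcases eq_or_ne t 0 with rfl | ht
  · rw [if_pos (by simp), add_zero, h]
  · have hnot : ¬ (s + t ≤ s) := by
      rw [add_le_iff_nonpos_right, le_zero_iff]
      exact ht
    rw [if_neg hnot, add_tsub_cancel_left]

variable [PolishSpace X]

lemma measurable_glue (s : ℝ≥0) :
    Measurable (fun p : IPath X × IPath X => glue s p.1 p.2) := by
  intro S hS
  have hScyl : MeasurableSet[cyl X] S := borel_le_cyl S hS
  have hle : MeasurableSpace.comap (fun p : IPath X × IPath X => glue s p.1 p.2) (cyl X) ≤
      (inferInstance : MeasurableSpace (IPath X × IPath X)) := by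
    rw [cyl, MeasurableSpace.comap_iSup]
    refine iSup_le fun t => ?_
    rw [MeasurableSpace.comap_comp]
    refine Measurable.comap_le ?_
    have : ((fun w : IPath X => w t) ∘ fun p : IPath X × IPath X => glue s p.1 p.2) =
        fun p : IPath X × IPath X =>
          if p.2 0 = p.1 s then (if t ≤ s then p.1 t else p.2 (t - s)) else p.1 t := by
      funext p; exact glue_eval s p.1 p.2 t
    rw [this]
    have hD : MeasurableSet {p : IPath X × IPath X | p.2 0 = p.1 s} := by
      have : Continuous (fun p : IPath X × IPath X => (p.2 0, p.1 s)) := by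
        refine Continuous.prodMk ?_ ?_
        · exact (ContinuousEvalConst.continuous_eval_const 0).comp continuous_snd
        · exact (ContinuousEvalConst.continuous_eval_const s).comp continuous_fst
      exact (isClosed_diagonal.preimage this).measurableSet
    refine Measurable.ite hD ?_ ((measurable_eval t).comp measurable_fst)
    by_cases ht : t ≤ s
    · simpa [ht, Function.comp_def] using (measurable_eval t).comp measurable_fst
    · simpa [ht, Function.comp_def] using (measurable_eval (t - s)).comp measurable_snd
  exact hle _ ⟨S, hScyl, rfl⟩

/-- ℱ_s-measurability of `w ↦ Q w B` for every Borel `B`. -/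
theorem measurable_Q (s : ℝ≥0) (Q : IPath X → Measure (IPath X))
    (hQprob : ∀ w, IsProbabilityMeasure (Q w))
    (hQmeas : ∀ f : BoundedContinuousFunction (IPath X) ℝ,
      Measurable[natF X s] fun w => ∫ v, f v ∂(Q w)) :
    ∀ ⦃B : Set (IPath X)⦄, MeasurableSet B → Measurable[natF X s] fun w => Q w B := by
  have hgen : (inferInstance : MeasurableSpace (IPath X)) =
      MeasurableSpace.generateFrom {F : Set (IPath X) | IsClosed F} := by
    borelize (IPath X)
    exact borel_eq_generateFrom_isClosed
  have hpi : IsPiSystem {F : Set (IPath X) | IsClosed F} :=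
    fun F₁ h₁ F₂ h₂ _ => h₁.inter h₂
  refine MeasurableSpace.induction_on_inter hgen hpi ?_ ?_ ?_ ?_
  · simpa using (measurable_const : Measurable[natF X s] fun _ : IPath X => (0 : ℝ≥0∞))
  · -- closed sets
    intro F hF
    have hFc : IsClosed F := hF
    -- approximating sequence
    have htend : ∀ w, Filter.Tendsto (fun n => ∫⁻ x, hFc.apprSeq n x ∂(Q w))
        Filter.atTop (nhds (Q w F)) := fun w =>
      HasOuterApproxClosed.tendsto_lintegral_apprSeq hFc (Q w)
    have hmeasn : ∀ n, Measurable[natF X s] fun w => ∫⁻ x, hFc.apprSeq n x ∂(Q w) := by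
      intro n
      have hrw : (fun w => ∫⁻ x, hFc.apprSeq n x ∂(Q w)) =
          fun w => ENNReal.ofReal (∫ x, ((hFc.apprSeq n x : ℝ)) ∂(Q w)) := by
        funext w
        rw [← BoundedContinuousFunction.toReal_lintegral_coe_eq_integral,
          ENNReal.ofReal_toReal (BoundedContinuousFunction.lintegral_lt_top_of_nnreal _ _).ne]
      rw [hrw]
      have hf : Measurable[natF X s] fun w =>
          ∫ x, ((hFc.apprSeq n).comp ((↑) : ℝ≥0 → ℝ) isometry_subtype_coe.lipschitz x) ∂(Q w) :=
        hQmeas _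
      exact ENNReal.measurable_ofReal.comp hf
    exact ENNReal.measurable_of_tendsto hmeasn (tendsto_pi_nhds.2 htend)
  · -- complement
    intro B hB hQB
    have : (fun w => Q w Bᶜ) = fun w => 1 - Q w B := by
      funext w
      have := hQprob w
      rw [measure_compl hB (measure_ne_top _ _), measure_univ]
    rw [this]
    exact Measurable.const_sub hQB 1
  · -- disjoint union
    intro f hdisj hmeas hQf
    have : (fun w => Q w (⋃ i, f i)) = fun w => ∑' i, Q w (f i) := by
      funext w; exact measure_iUnion hdisj hmeas
    rw [this]
    exact Measurable.ennreal_tsum hQf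


lemma lintegral_congr_natF (s : ℝ≥0) {R P : Measure (IPath X)}
    (hRP : ∀ A, MeasurableSet[natF X s] A → R A = P A)
    {f : IPath X → ℝ≥0∞} (hf : Measurable[natF X s] f) :
    ∫⁻ w, f w ∂ R = ∫⁻ w, f w ∂P := by
  have hm : natF X s ≤ (inferInstance : MeasurableSpace (IPath X)) := natF_le (X := X) s
  have htrim : R.trim hm = P.trim hm := by
    refine @Measure.ext _ (natF X s) _ _ fun A hA => ?_
    rw [trim_measurableSet_eq hm hA, trim_measurableSet_eq hm hA, hRP A hA]
  calc ∫⁻ w, f w ∂ R = ∫⁻ w, f w ∂(R.trim hm) := (lintegral_trim hm hf).symm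
    _ = ∫⁻ w, f w ∂(P.trim hm) := by rw [htrim]
    _ = ∫⁻ w, f w ∂P := lintegral_trim hm hf

/-- the π-system of sets `A ∩ (θ_s)⁻¹ B` -/
def piSys (X : Type*) [TopologicalSpace X] [MeasurableSpace X] (s : ℝ≥0) :
    Set (Set (IPath X)) :=
  {S | ∃ A, MeasurableSet[natF X s] A ∧ ∃ B, MeasurableSet B ∧ S = A ∩ shift s ⁻¹' B}

lemma isPiSystem_piSys (s : ℝ≥0) : IsPiSystem (piSys X s) := by
  rintro S₁ ⟨A₁, hA₁, B₁, hB₁, rfl⟩ S₂ ⟨A₂, hA₂, B₂, hB₂, rfl⟩ _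
  refine ⟨A₁ ∩ A₂, hA₁.inter hA₂, B₁ ∩ B₂, hB₁.inter hB₂, ?_⟩
  ext w
  simp only [Set.mem_inter_iff, Set.mem_preimage]
  tauto

lemma generateFrom_piSys (s : ℝ≥0) :
    (inferInstance : MeasurableSpace (IPath X)) =
      MeasurableSpace.generateFrom (piSys X s) := by
  refine le_antisymm ?_ (MeasurableSpace.generateFrom_le ?_)
  · refine le_trans borel_le_cyl (iSup_le fun t => ?_)
    refine Measurable.comap_le ?_
    intro U hU
    by_cases ht : t ≤ s
    · refine MeasurableSpace.measurableSet_generateFrom ?_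
      refine ⟨(fun w : IPath X => w t) ⁻¹' U, natF_eval_measurable s ht hU,
        Set.univ, MeasurableSet.univ, ?_⟩
      simp
    · refine MeasurableSpace.measurableSet_generateFrom ?_
      refine ⟨Set.univ, MeasurableSet.univ,
        (fun w : IPath X => w (t - s)) ⁻¹' U, (measurable_eval (t - s)) hU, ?_⟩
      ext w
      simp [shift_apply, add_tsub_cancel_of_le (le_of_not_ge ht)]
  · rintro S ⟨A, hA, B, hB, rfl⟩
    exact (natF_le s A hA).inter ((continuous_shift s).measurable hB)

theorem exists_unique_otimes'
    (s : ℝ≥0) (P : Measure (IPath X)) [IsProbabilityMeasure P]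
    (Q : IPath X → Measure (IPath X))
    (hQprob : ∀ w, IsProbabilityMeasure (Q w))
    (hQmeas : ∀ f : BoundedContinuousFunction (IPath X) ℝ,
      Measurable[natF X s] fun w => ∫ v, f v ∂(Q w))
    (hQsupp : ∀ w : IPath X, Q w {v : IPath X | v 0 = w s} = 1) :
    ∃! R : Measure (IPath X), IsProbabilityMeasure R ∧
      (∀ A : Set (IPath X), MeasurableSet[natF X s] A → R A = P A) ∧
      (∀ A : Set (IPath X), MeasurableSet[natF X s] A →
        ∀ B : Set (IPath X), MeasurableSet B →
          R (A ∩ shift s ⁻¹' B) = ∫⁻ w in A, Q w B ∂ R) := by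
  classical
  have hQm : ∀ ⦃B : Set (IPath X)⦄, MeasurableSet B →
      Measurable[natF X s] fun w => Q w B := measurable_Q s Q hQprob hQmeas
  have hQmeas' : Measurable Q := by
    refine Measure.measurable_of_measurable_coe Q fun B hB => ?_
    exact (hQm hB).mono (natF_le s) le_rfl
  set κ : ProbabilityTheory.Kernel (IPath X) (IPath X) := ⟨Q, hQmeas'⟩ with hκ
  haveI : ProbabilityTheory.IsMarkovKernel κ := ⟨fun w => hQprob w⟩
  set g2 : IPath X × IPath X → IPath X := fun p => glue s p.1 p.2 with hg2
  have hg2m : Measurable g2 := measurable_glue s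
  set R : Measure (IPath X) := (P.compProd κ).map g2 with hR
  haveI hRprob : IsProbabilityMeasure R := Measure.isProbabilityMeasure_map hg2m.aemeasurable
  have hpt : ∀ (A : Set (IPath X)), MeasurableSet[natF X s] A →
      ∀ (B : Set (IPath X)), MeasurableSet B → ∀ w,
      Q w {v | g2 (w, v) ∈ A ∩ shift s ⁻¹' B} = A.indicator (fun w => Q w B) w := by
    intro A hA B hB w
    haveI := hQprob w
    have hmT : MeasurableSet {v : IPath X | v 0 = w s} := by
      have hc : Continuous fun v : IPath X => v 0 := ContinuousEvalConst.continuous_eval_const 0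
      exact (isClosed_eq hc continuous_const).measurableSet
    have hT : ∀ᵐ v ∂Q w, v 0 = w s := by
      rw [ae_iff]
      have hcompl : {v : IPath X | ¬ v 0 = w s} = {v : IPath X | v 0 = w s}ᶜ := rfl
      rw [hcompl, measure_compl hmT (measure_ne_top _ _), hQsupp w, measure_univ, tsub_self]
    by_cases hwA : w ∈ A
    · have hae : {v | g2 (w, v) ∈ A ∩ shift s ⁻¹' B} =ᵐ[Q w] B := by
        refine Filter.eventuallyEq_set.2 ?_
        filter_upwards [hT] with v hv
        have h1 : glue s w v ∈ A ↔ w ∈ A := natF_invariant hA fun t ht => glue_agree hv ht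
        simp only [hg2, Set.mem_setOf_eq, Set.mem_inter_iff, Set.mem_preimage]
        rw [shift_glue hv]
        simp [h1, hwA]
      rw [measure_congr hae, Set.indicator_of_mem hwA]
    · have hae : {v | g2 (w, v) ∈ A ∩ shift s ⁻¹' B} =ᵐ[Q w] (∅ : Set (IPath X)) := by
        refine Filter.eventuallyEq_set.2 ?_
        filter_upwards [hT] with v hv
        have h1 : glue s w v ∈ A ↔ w ∈ A := natF_invariant hA fun t ht => glue_agree hv ht
        simp [hg2, h1, hwA]
      rw [measure_congr hae, measure_empty, Set.indicator_of_notMem hwA]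
  have key : ∀ (A : Set (IPath X)), MeasurableSet[natF X s] A →
      ∀ (B : Set (IPath X)), MeasurableSet B →
      R (A ∩ shift s ⁻¹' B) = ∫⁻ w in A, Q w B ∂P := by
    intro A hA B hB
    have hAb : MeasurableSet A := natF_le s A hA
    have hSb : MeasurableSet (A ∩ shift s ⁻¹' B) :=
      hAb.inter ((continuous_shift s).measurable hB)
    rw [hR, Measure.map_apply hg2m hSb, Measure.compProd_apply (hg2m hSb)]
    have hκw : ∀ w, κ w (Prod.mk w ⁻¹' (g2 ⁻¹' (A ∩ shift s ⁻¹' B)))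
        = A.indicator (fun w => Q w B) w := fun w => hpt A hA B hB w
    rw [lintegral_congr hκw, lintegral_indicator hAb]
  have hRagree : ∀ A, MeasurableSet[natF X s] A → R A = P A := by
    intro A hA
    have h1 := key A hA Set.univ MeasurableSet.univ
    simp only [Set.preimage_univ, Set.inter_univ] at h1
    rw [h1]
    have h2 : ∀ w, Q w Set.univ = 1 := fun w => (hQprob w).measure_univ
    calc ∫⁻ w in A, Q w Set.univ ∂P = ∫⁻ _ in A, 1 ∂P := lintegral_congr fun w => h2 w
      _ = P A := by rw [setLIntegral_one]
  have hind : ∀ {A B : Set (IPath X)}, MeasurableSet[natF X s] A → MeasurableSet B →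
      ∀ {μ : Measure (IPath X)}, (∀ A, MeasurableSet[natF X s] A → μ A = P A) →
      ∫⁻ w in A, Q w B ∂μ = ∫⁻ w in A, Q w B ∂P := by
    intro A B hA hB μ hμ
    have hAb : MeasurableSet A := natF_le s A hA
    have hf : Measurable[natF X s] (A.indicator fun w => Q w B) := (hQm hB).indicator hA
    rw [← lintegral_indicator hAb, ← lintegral_indicator hAb,
      lintegral_congr_natF s hμ hf]
  have hRcond : ∀ A, MeasurableSet[natF X s] A → ∀ B, MeasurableSet B →
      R (A ∩ shift s ⁻¹' B) = ∫⁻ w in A, Q w B ∂ R := by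
    intro A hA B hB
    rw [key A hA B hB, hind hA hB hRagree]
  refine ⟨R, ⟨hRprob, hRagree, hRcond⟩, ?_⟩
  rintro R' ⟨hR'prob, hR'agree, hR'cond⟩
  refine MeasureTheory.ext_of_generate_finite (piSys X s) (generateFrom_piSys s)
    (isPiSystem_piSys s) ?_ ?_
  · rintro S ⟨A, hA, B, hB, rfl⟩
    rw [hR'cond A hA B hB, hRcond A hA B hB, hind hA hB hR'agree, hind hA hB hRagree]
  · rw [measure_univ, measure_univ]

end OTimes

/-- **Existence and uniqueness of `P ⊗_s Q`.**  Given a probability measure `P` on the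
path space of a Polish space `X`, and an `ℱ_s`-measurable family `w ↦ Q w` of
probability measures with `Q w` supported on `Ω_{w(s)}`, there is a unique probability
measure `R = P ⊗_s Q` agreeing with `P` on `ℱ_s` whose regular conditional probability
distribution satisfies `R[θ_s⁻¹(B) | ℱ_s](w) = Q w (B)` for `R`-almost all `w`; the
latter is expressed by `R (A ∩ θ_s⁻¹ B) = ∫_A Q w (B) dR(w)` for all `A ∈ ℱ_s` and
Borel `B`. -/
theorem exists_unique_otimes
    {X : Type*} [TopologicalSpace X] [PolishSpace X] [MeasurableSpace X] [BorelSpace X]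
    (s : ℝ≥0) (P : Measure (IPath X)) [IsProbabilityMeasure P]
    (Q : IPath X → Measure (IPath X))
    (hQprob : ∀ w, IsProbabilityMeasure (Q w))
    (hQmeas : ∀ f : BoundedContinuousFunction (IPath X) ℝ,
      Measurable[natF X s] fun w => ∫ v, f v ∂(Q w))
    (hQsupp : ∀ w : IPath X, Q w {v : IPath X | v 0 = w s} = 1) :
    ∃! R : Measure (IPath X), IsProbabilityMeasure R ∧
      (∀ A : Set (IPath X), MeasurableSet[natF X s] A → R A = P A) ∧
      (∀ A : Set (IPath X), MeasurableSet[natF X s] A →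
        ∀ B : Set (IPath X), MeasurableSet B →
          R (A ∩ shift s ⁻¹' B) = ∫⁻ w, Q w B ∂(R.restrict A)) := by
  exact OTimes.exists_unique_otimes' s P Q hQprob hQmeas hQsupp
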